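/- Let S be a nonempty semigroup such that S \ E(S) is finite. Suppose x_1, ..., x_k are distinct elements of S such that: each cyclic subsemigroup ⟨x_i⟩ is finite with index I(x_i) ≡ 1 (mod P(x_i)); x_i * x_j = x_j * x_i = x_j for all 1 ≤ i < j ≤ k; the sets of non-idempotent elements of the ⟨x_i⟩ are pairwise disjoint; and every element of S outside ⋃_{i=1}^k ⟨x_i⟩ is an idempotent. Let T be the S-valued sequence in which each x_i occurs exactly I(x_i) + P(x_i) − 2 times and no other element occurs. Then T has length |S \ E(S)| and Π(T) ∩ E(S) = ∅. -/

import Mathlib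

/-- Product, in order, of the nonempty list `a :: l` in a semigroup. -/
def sprod {S : Type*} [Mul S] (a : S) (l : List S) : S := l.foldl (· * ·) a

/-- `pow1 x n = x^(n+1)`: the `(n+1)`-st power of `x` in a semigroup. -/
def pow1 {S : Type*} [Mul S] (x : S) : ℕ → S := fun n => Nat.rec x (fun _ y => y * x) n

/-- `Π(T)`: the set of products, in order, of nonempty lists which are
permutations of order-preserving sublists of `T`. -/
def PiSet {S : Type*} [Mul S] (T : List S) : Set S :=
  {s | ∃ u : List S, u.Sublist T ∧ ∃ a l, (a :: l).Perm u ∧ sprod a l = s}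

/-- `A(L)`: the set of products, in order, of nonempty order-preserving sublists of `L`. -/
def ASet {S : Type*} [Mul S] (L : List S) : Set S :=
  {s | ∃ a l, (a :: l).Sublist L ∧ sprod a l = s}

/-- `HasIndexPeriod x r p` says that `r` is the index of `x` (the least `r > 0` such
that `x^r = x^t` for some positive `t ≠ r`) and `p` is the period of `x` (the least
`p > 0` with `x^(r+p) = x^r`). Powers are expressed via `pow1 x (n-1) = x^n`. -/
def HasIndexPeriod {S : Type*} [Mul S] (x : S) (r p : ℕ) : Prop :=
  (0 < r ∧ (∃ t, 0 < t ∧ t ≠ r ∧ pow1 x (t - 1) = pow1 x (r - 1)) ∧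
    ∀ r', 0 < r' → (∃ t, 0 < t ∧ t ≠ r' ∧ pow1 x (t - 1) = pow1 x (r' - 1)) → r ≤ r') ∧
  (0 < p ∧ pow1 x (r + p - 1) = pow1 x (r - 1) ∧
    ∀ p', 0 < p' → pow1 x (r + p' - 1) = pow1 x (r - 1) → p ≤ p')

section Helpers
variable {S : Type*} [Semigroup S]

theorem my_pow1_succ (x : S) (n : ℕ) : pow1 x (n+1) = pow1 x n * x := rfl

theorem my_pow1_add (x : S) (a b : ℕ) : pow1 x (a + b + 1) = pow1 x a * pow1 x b := by
  induction b with
  | zero => rfl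
  | succ b ih =>
    have h : a + (b+1) + 1 = (a + b + 1) + 1 := by omega
    rw [h, my_pow1_succ, ih, my_pow1_succ, mul_assoc]

theorem my_absorb1 (y z : S) (h : y * z = y) : ∀ n, pow1 y n * z = pow1 y n := by
  intro n; induction n with
  | zero => exact h
  | succ n ih => rw [my_pow1_succ, mul_assoc, h]

theorem my_absorb2 (y z : S) (h : y * z = z) : ∀ n, pow1 y n * z = z := by
  intro n; induction n with
  | zero => exact h
  | succ n ih => rw [my_pow1_succ, mul_assoc, h, ih]

variable (x : S) (R p : ℕ)

theorem my_periodic (hper : pow1 x (R + p) = pow1 x R) :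
    ∀ a, R ≤ a → pow1 x (a + p) = pow1 x a := by
  intro a ha
  obtain ⟨d, rfl⟩ := Nat.exists_eq_add_of_le ha
  cases d with
  | zero => simpa using hper
  | succ d =>
    have h1 : R + (d+1) + p = (R + p) + d + 1 := by omega
    have h2 : R + (d+1) = R + d + 1 := by omega
    rw [h1, my_pow1_add, hper, ← my_pow1_add, ← h2]

theorem my_periodic_mul (hper : pow1 x (R + p) = pow1 x R) :
    ∀ a, R ≤ a → ∀ q, pow1 x (a + q * p) = pow1 x a := by
  intro a ha q
  induction q with
  | zero => simp
  | succ q ih =>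
    have h : a + (q+1) * p = (a + q * p) + p := by ring
    rw [h, my_periodic x R p hper _ (le_trans ha (Nat.le_add_right _ _)), ih]

theorem my_reduce (hp : 0 < p) (hper : pow1 x (R + p) = pow1 x R) :
    ∀ m, ∃ m', m' < R + p ∧ pow1 x m = pow1 x m' := by
  intro m
  induction m using Nat.strong_induction_on with
  | _ m ih =>
    by_cases h : m < R + p
    · exact ⟨m, h, rfl⟩
    · push_neg at h
      have h2 : pow1 x m = pow1 x (m - p) := by
        have h1 : m = (m - p) + p := by omega
        conv_lhs => rw [h1]
        exact my_periodic x R p hper _ (by omega)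
      obtain ⟨m', hm', he⟩ := ih (m - p) (by omega)
      exact ⟨m', hm', h2.trans he⟩

theorem my_dvd (hp : 0 < p) (hper : pow1 x (R + p) = pow1 x R)
    (hpmin : ∀ c, 0 < c → pow1 x (R + c) = pow1 x R → p ≤ c) :
    ∀ a c, R ≤ a → 0 < c → pow1 x (a + c) = pow1 x a → p ∣ c := by
  intro a c ha hc heq
  have key : pow1 x (R + c) = pow1 x R := by
    obtain ⟨M, hM⟩ : ∃ M, M = (a + 1) * p := ⟨_, rfl⟩
    have hq1 : a + 1 ≤ M := by
      rw [hM]; exact Nat.le_mul_of_pos_right _ hp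
    have p1 : pow1 x (R + c + M) = pow1 x (R + c) := by
      rw [hM]; exact my_periodic_mul x R p hper _ (Nat.le_add_right _ _) _
    have p2 : pow1 x (R + M) = pow1 x R := by
      rw [hM]; exact my_periodic_mul x R p hper _ le_rfl _
    have e1 : R + c + M = (R + M - (a+1)) + (a + c) + 1 := by omega
    have e2 : (R + M - (a+1)) + a + 1 = R + M := by omega
    calc pow1 x (R + c) = pow1 x (R + c + M) := p1.symm
      _ = pow1 x (R + M - (a+1)) * pow1 x (a + c) := by rw [e1, my_pow1_add]
      _ = pow1 x (R + M - (a+1)) * pow1 x a := by rw [heq]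
      _ = pow1 x (R + M) := by rw [← my_pow1_add, e2]
      _ = pow1 x R := p2
  rcases Nat.eq_zero_or_pos (c % p) with h0 | h0
  · exact Nat.dvd_of_mod_eq_zero h0
  · exfalso
    have h4 := Nat.mod_add_div' c p
    have e3 : R + c = (R + c % p) + (c / p) * p := by omega
    rw [e3, my_periodic_mul x R p hper (R + c % p) (Nat.le_add_right _ _) (c/p)] at key
    have h5 := hpmin (c % p) h0 key
    have h6 := Nat.mod_lt c hp
    omega

theorem my_not_idem (hp : 0 < p) (hper : pow1 x (R + p) = pow1 x R)
    (hpmin : ∀ c, 0 < c → pow1 x (R + c) = pow1 x R → p ≤ c)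
    (hdvdR : p ∣ R)
    (hcol : ∀ a b, pow1 x a = pow1 x b → a = b ∨ (R ≤ a ∧ R ≤ b)) :
    ∀ m, m + 1 < R + p → pow1 x m * pow1 x m ≠ pow1 x m := by
  intro m hm heq
  have h2 : pow1 x (m + (m + 1)) = pow1 x m := by
    have e : m + (m+1) = m + m + 1 := by omega
    rw [e, my_pow1_add]; exact heq
  have hR : R ≤ m := by
    rcases hcol _ _ h2 with h | h
    · omega
    · exact h.2
  have hd := my_dvd x R p hp hper hpmin m (m+1) hR (by omega) h2
  have hd2 : p ∣ (m + 1 - R) := Nat.dvd_sub hd hdvdR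
  have h6 := Nat.le_of_dvd (by omega) hd2
  omega

theorem my_idem_top (hp : 0 < p) (hper : pow1 x (R + p) = pow1 x R) (hdvdR : p ∣ R) :
    pow1 x (R + p - 1) * pow1 x (R + p - 1) = pow1 x (R + p - 1) := by
  obtain ⟨q, hq⟩ := Dvd.dvd.add hdvdR (dvd_refl p)
  have hq' : R + p = q * p := by rw [hq, Nat.mul_comm]
  have e1 : (R + p - 1) + (R + p - 1) + 1 = (R + p - 1) + q * p := by omega
  rw [← my_pow1_add, e1]
  exact my_periodic_mul x R p hper (R + p - 1) (by omega) q

theorem my_inj (hp : 0 < p) (hper : pow1 x (R + p) = pow1 x R)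
    (hpmin : ∀ c, 0 < c → pow1 x (R + c) = pow1 x R → p ≤ c)
    (hcol : ∀ a b, pow1 x a = pow1 x b → a = b ∨ (R ≤ a ∧ R ≤ b)) :
    ∀ a b, a < R + p → b < R + p → pow1 x a = pow1 x b → a = b := by
  have main : ∀ a b, a < b → b < R + p → pow1 x a = pow1 x b → False := by
    intro a b hab hb heq
    rcases hcol a b heq with h | ⟨hRa, _⟩
    · omega
    · have h2 : pow1 x (a + (b - a)) = pow1 x a := by
        rw [show a + (b - a) = b by omega]; exact heq.symm
      have hd := my_dvd x R p hp hper hpmin a (b - a) hRa (by omega) h2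
      have := Nat.le_of_dvd (by omega) hd
      omega
  intro a b ha hb heq
  rcases lt_trichotomy a b with h | h | h
  · exact (main a b h hb heq).elim
  · exact h
  · exact (main b a h ha heq.symm).elim

end Helpers

/-- Sufficiency: a sequence built from elements `x_1, …, x_k` as in the main theorem
(with `x_i` occurring `I(x_i) + P(x_i) - 2` times) has length `|S \ E(S)|` and is
idempotent-product free. -/
theorem stmt_12 {S : Type*} [Semigroup S] [Nonempty S] [DecidableEq S]
    (hfin : {x : S | x * x ≠ x}.Finite)
    (k : ℕ) (x : Fin k → S) (hinj : Function.Injective x)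
    (r p : Fin k → ℕ)
    (hcyc : ∀ i, (Set.range (pow1 (x i))).Finite)
    (hip : ∀ i, HasIndexPeriod (x i) (r i) (p i))
    (hmod : ∀ i, r i ≡ 1 [MOD p i])
    (hmul : ∀ i j, i < j → x i * x j = x j ∧ x j * x i = x j)
    (hdisj : ∀ i j, i ≠ j →
      {y ∈ Set.range (pow1 (x i)) | y * y ≠ y}
        ∩ {y ∈ Set.range (pow1 (x j)) | y * y ≠ y} = ∅)
    (hout : ∀ s : S, s ∉ ⋃ i, Set.range (pow1 (x i)) → s * s = s)
    (T : List S)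
    (hcount : ∀ i, T.count (x i) = r i + p i - 2)
    (hsupp : ∀ s ∈ T, ∃ i, s = x i) :
    T.length = {x : S | x * x ≠ x}.ncard ∧ PiSet T ∩ {e : S | e * e = e} = ∅ := by
  classical
  have hr1 : ∀ i, 1 ≤ r i := fun i => (hip i).1.1
  have hp0 : ∀ i, 0 < p i := fun i => (hip i).2.1
  have hcol : ∀ i a b, pow1 (x i) a = pow1 (x i) b → a = b ∨ (r i - 1 ≤ a ∧ r i - 1 ≤ b) := by
    intro i a b heq
    by_cases hab : a = b
    · exact Or.inl hab
    · right
      have h1 := (hip i).1.2.2 (a+1) (Nat.succ_pos a) ⟨b+1, Nat.succ_pos b, by omega, by simpa using heq.symm⟩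
      have h2 := (hip i).1.2.2 (b+1) (Nat.succ_pos b) ⟨a+1, Nat.succ_pos a, by omega, by simpa using heq⟩
      omega
  have hper : ∀ i, pow1 (x i) ((r i - 1) + p i) = pow1 (x i) (r i - 1) := by
    intro i
    have h := (hip i).2.2.1
    have e : r i + p i - 1 = (r i - 1) + p i := by have := hr1 i; omega
    rwa [e] at h
  have hpmin : ∀ i c, 0 < c → pow1 (x i) ((r i - 1) + c) = pow1 (x i) (r i - 1) → p i ≤ c := by
    intro i c hc h
    apply (hip i).2.2.2 c hc
    have e : r i + c - 1 = (r i - 1) + c := by have := hr1 i; omega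
    rwa [e]
  have hdvdR : ∀ i, p i ∣ (r i - 1) := by
    intro i
    exact (Nat.modEq_iff_dvd' (hr1 i)).mp (hmod i).symm
  have hnid : ∀ i m, m + 1 < (r i - 1) + p i → pow1 (x i) m * pow1 (x i) m ≠ pow1 (x i) m :=
    fun i => my_not_idem (x i) (r i - 1) (p i) (hp0 i) (hper i) (hpmin i) (hdvdR i) (hcol i)
  have hidemtop : ∀ i, pow1 (x i) ((r i - 1) + p i - 1) * pow1 (x i) ((r i - 1) + p i - 1)
      = pow1 (x i) ((r i - 1) + p i - 1) :=
    fun i => my_idem_top (x i) (r i - 1) (p i) (hp0 i) (hper i) (hdvdR i)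
  have hinjpow : ∀ i a b, a < (r i - 1) + p i → b < (r i - 1) + p i →
      pow1 (x i) a = pow1 (x i) b → a = b :=
    fun i => my_inj (x i) (r i - 1) (p i) (hp0 i) (hper i) (hpmin i) (hcol i)
  -- the finsets of non-idempotents in each cyclic subsemigroup
  set F : Fin k → Finset S := fun i => (Finset.range ((r i - 1) + p i - 1)).image (pow1 (x i)) with hF
  have hFmem : ∀ i z, z ∈ F i ↔ ∃ m, m < (r i - 1) + p i - 1 ∧ pow1 (x i) m = z := by
    intro i z
    simp [hF, Finset.mem_image, Finset.mem_range]
  have hFfact : ∀ i z, z ∈ F i → z ∈ Set.range (pow1 (x i)) ∧ z * z ≠ z := by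
    intro i z hz
    obtain ⟨m, hm, rfl⟩ := (hFmem i z).mp hz
    exact ⟨⟨m, rfl⟩, hnid i m (by have := hp0 i; omega)⟩
  have hFcard : ∀ i, (F i).card = r i + p i - 2 := by
    intro i
    have hinjOn : Set.InjOn (pow1 (x i)) ↑(Finset.range ((r i - 1) + p i - 1)) := by
      intro m1 h1 m2 h2 he
      simp only [Finset.coe_range, Set.mem_Iio] at h1 h2
      exact hinjpow i m1 m2 (by omega) (by omega) he
    rw [hF]
    rw [Finset.card_image_of_injOn hinjOn, Finset.card_range]
    have := hr1 i; omega
  have hNF : {s : S | s * s ≠ s} = ↑(Finset.univ.biUnion F) := by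
    ext s
    constructor
    · intro hs
      replace hs : s * s ≠ s := hs
      have hsU : s ∈ ⋃ i, Set.range (pow1 (x i)) := by
        by_contra h; exact hs (hout s h)
      obtain ⟨i, m, hm⟩ : ∃ i m, pow1 (x i) m = s := by
        simpa [Set.mem_iUnion] using hsU
      obtain ⟨m', hm', he⟩ := my_reduce (x i) (r i - 1) (p i) (hp0 i) (hper i) m
      have hne : m' ≠ (r i - 1) + p i - 1 := by
        intro hcon
        apply hs
        have hse : s = pow1 (x i) ((r i - 1) + p i - 1) := by rw [← hm, he, hcon]
        rw [hse]; exact hidemtop i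
      exact Finset.mem_coe.mpr (Finset.mem_biUnion.mpr
        ⟨i, Finset.mem_univ i, (hFmem i s).mpr ⟨m', by omega, by rw [← he, hm]⟩⟩)
    · intro hs
      obtain ⟨i, _, hi⟩ := Finset.mem_biUnion.mp (Finset.mem_coe.mp hs)
      exact (hFfact i s hi).2
  have hdisjF : ∀ i ∈ Finset.univ, ∀ j ∈ Finset.univ, i ≠ j → Disjoint (F i) (F j) := by
    intro i _ j _ hij
    rw [Finset.disjoint_left]
    intro z hzi hzj
    have h1 := hFfact i z hzi
    have h2 := hFfact j z hzj
    have := hdisj i j hij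
    rw [Set.eq_empty_iff_forall_notMem] at this
    exact this z ⟨⟨h1.1, h1.2⟩, ⟨h2.1, h2.2⟩⟩
  have hcard : ({s : S | s * s ≠ s}).ncard = ∑ i, (r i + p i - 2) := by
    rw [hNF, Set.ncard_coe_finset, Finset.card_biUnion hdisjF]
    exact Finset.sum_congr rfl (fun i _ => hFcard i)
  -- length of T
  have hlensum : ∀ L : List S, (∀ s ∈ L, ∃ i, s = x i) → L.length = ∑ i, L.count (x i) := by
    intro L
    induction L with
    | nil => simp
    | cons b L ih =>
      intro h
      obtain ⟨i0, rfl⟩ := h b (by simp)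
      have hL := ih (fun s hs => h s (by simp [hs]))
      simp only [List.length_cons, List.count_cons, beq_iff_eq]
      rw [Finset.sum_add_distrib, ← hL]
      have hone : (∑ i : Fin k, if x i0 = x i then (1:ℕ) else 0) = 1 := by
        simp only [hinj.eq_iff]
        simp
      rw [hone]
  have hlenT : T.length = ∑ i, (r i + p i - 2) := by
    rw [hlensum T hsupp]
    exact Finset.sum_congr rfl (fun i _ => hcount i)
  -- the product lemma
  have hprod : ∀ (l : List S) (a : S), (∀ s ∈ a :: l, ∃ i, s = x i) →
      ∃ j : Fin k, (∀ i, x i ∈ a :: l → i ≤ j) ∧ x j ∈ a :: l ∧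
        sprod a l = pow1 (x j) ((a :: l).count (x j) - 1) := by
    intro l
    induction l using List.reverseRecOn with
    | nil =>
      intro a h
      obtain ⟨j, rfl⟩ := h a (by simp)
      refine ⟨j, ?_, by simp, ?_⟩
      · intro i hi
        have he : x i = x j := by simpa using hi
        exact le_of_eq (hinj he)
      · simp [sprod]
        rfl
    | append_singleton l b ih =>
      intro a h
      obtain ⟨i0, rfl⟩ := h b (by simp)
      obtain ⟨j, hmax, hmem, hval⟩ := ih a (fun s hs => h s (by
        simp only [List.mem_cons, List.mem_append] at hs ⊢; tauto))
      have hc1 : 0 < (a :: l).count (x j) := List.count_pos_iff.mpr hmem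
      have hsp : sprod a (l ++ [x i0]) = sprod a l * x i0 := by
        simp [sprod, List.foldl_append]
      have hshape : a :: (l ++ [x i0]) = (a :: l) ++ [x i0] := rfl
      rcases lt_trichotomy i0 j with hlt | hequ | hgt
      · refine ⟨j, ?_, ?_, ?_⟩
        · intro i hi
          rw [hshape, List.mem_append] at hi
          rcases hi with hi | hi
          · exact hmax i hi
          · have : i = i0 := hinj (by simpa using hi)
            omega
        · rw [hshape]; exact List.mem_append_left _ hmem
        · have hcc : ((a :: l) ++ [x i0]).count (x j) = (a :: l).count (x j) := by
            rw [List.count_append]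
            have hne : x j ≠ x i0 := fun e => absurd (hinj e) (by omega)
            simp [hne, List.count_eq_zero]
          rw [hshape, hcc, hsp, hval]
          exact my_absorb1 (x j) (x i0) ((hmul i0 j hlt).2) _
      · subst hequ
        refine ⟨i0, ?_, ?_, ?_⟩
        · intro i hi
          rw [hshape, List.mem_append] at hi
          rcases hi with hi | hi
          · exact hmax i hi
          · exact le_of_eq (hinj (by simpa using hi))
        · rw [hshape]; exact List.mem_append_left _ hmem
        · have hcc : ((a :: l) ++ [x i0]).count (x i0) = (a :: l).count (x i0) + 1 := by
            rw [List.count_append]; simp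
          rw [hshape, hcc, hsp, hval]
          have e : (a :: l).count (x i0) + 1 - 1 = ((a :: l).count (x i0) - 1) + 1 := by omega
          rw [e]
          rfl
      · have hnotmem : x i0 ∉ a :: l := fun hmem' => absurd (hmax i0 hmem') (by omega)
        refine ⟨i0, ?_, ?_, ?_⟩
        · intro i hi
          rw [hshape, List.mem_append] at hi
          rcases hi with hi | hi
          · exact le_of_lt (lt_of_le_of_lt (hmax i hi) hgt)
          · exact le_of_eq (hinj (by simpa using hi))
        · rw [hshape]; exact List.mem_append_right _ (by simp)
        · have hcc : ((a :: l) ++ [x i0]).count (x i0) = 1 := by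
            rw [List.count_append]
            have h0 : (a :: l).count (x i0) = 0 := List.count_eq_zero.mpr hnotmem
            simp [h0]
          rw [hshape, hcc, hsp, hval]
          exact my_absorb2 (x j) (x i0) ((hmul j i0 hgt).1) _
  constructor
  · rw [hlenT, hcard]
  · apply Set.eq_empty_iff_forall_notMem.mpr
    rintro s ⟨⟨u, hu, a, l, hperm, hval⟩, hid⟩
    have hid' : s * s = s := hid
    obtain ⟨j, hmax, hmem, hprodeq⟩ := hprod l a (fun t ht => hsupp t (hu.subset (hperm.subset ht)))
    have hm0 : 0 < (a :: l).count (x j) := List.count_pos_iff.mpr hmem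
    have hmle : (a :: l).count (x j) ≤ r j + p j - 2 := by
      rw [hperm.count_eq]
      rw [← hcount j]
      exact hu.count_le (x j)
    have hs : s = pow1 (x j) ((a :: l).count (x j) - 1) := hval.symm.trans hprodeq
    refine hnid j ((a :: l).count (x j) - 1) ?_ ?_
    · have := hr1 j; have := hp0 j; omega
    · rw [← hs]; exact hid'
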